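/- Let δ₁,…,δ_k be unit vectors in ℝ^n with pairwise nonpositive dot products (δᵢ·δⱼ ≤ 0 for i ≠ j). Then for i < j, the vector R(δ_{i+1})⋯R(δ_{j-1})δⱼ is a non-negative linear combination of δ_{i+1},…,δⱼ, and consequently δᵢ · (R(δ_{i+1})⋯R(δ_{j-1})δⱼ) ≤ 0, hence ε_i · ε_j ≥ 0 where ε_m = R(δ₁)⋯R(δ_{m-1})δ_m. -/

import Mathlib

noncomputable section
open scoped RealInnerProductSpace

abbrev Euc (n : ℕ) := EuclideanSpace ℝ (Fin n)

lemma refl_apply {n : ℕ} (v x : Euc n) (hv : ‖v‖ = 1) :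
    Submodule.reflection (ℝ ∙ v)ᗮ x = x - (2 * ⟪v, x⟫) • v := by
  rw [Submodule.reflection_apply, Submodule.starProjection_orthogonal_val, Submodule.starProjection_singleton]
  simp only [hv, one_pow, div_one, RCLike.ofReal_real_eq_id, id_eq]
  module

lemma keyA {n k : ℕ} (δ : ℕ → Euc n)
    (hunit : ∀ i < k, ‖δ i‖ = 1)
    (hobtuse : ∀ i < k, ∀ j < k, i ≠ j → ⟪δ i, δ j⟫ ≤ 0) :
    ∀ d i, i + 1 + d < k → ∃ c : ℕ → ℝ, (∀ l, 0 ≤ c l) ∧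
      ((List.range' (i + 1) d).map fun m => Submodule.reflection (ℝ ∙ (δ m))ᗮ).prod (δ (i + 1 + d)) =
        ∑ l ∈ Finset.Icc (i + 1) (i + 1 + d), c l • δ l := by
  intro d
  induction d with
  | zero =>
    intro i hi
    refine ⟨fun l => if l = i + 1 then 1 else 0, fun l => by positivity, ?_⟩
    simp
  | succ d ih =>
    intro i hi
    obtain ⟨c, hc0, hc⟩ := ih (i + 1) (by omega)
    have h1 : i + 1 + 1 + d = i + 1 + (d + 1) := by omega
    rw [h1] at hc
    have hrange : List.range' (i + 1) (d + 1) = (i + 1) :: List.range' (i + 2) d := by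
      rw [List.range'_succ]
    set j := i + 1 + (d + 1) with hjdef
    have hik : i + 1 < k := by omega
    refine ⟨fun l => if l = i + 1 then
        -∑ m ∈ Finset.Icc (i + 2) j, (2 * ⟪δ (i + 1), δ m⟫) * c m else c l, ?_, ?_⟩
    · intro l
      by_cases hl : l = i + 1
      · subst hl
        beta_reduce
        rw [if_pos rfl, neg_nonneg]
        refine Finset.sum_nonpos fun m hm => ?_
        rw [Finset.mem_Icc] at hm
        have hin : ⟪δ (i + 1), δ m⟫ ≤ 0 :=
          hobtuse (i + 1) hik m (by omega) (by omega)
        have := hc0 m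
        nlinarith
      · simp only [if_neg hl]; exact hc0 l
    · rw [hrange, List.map_cons, List.prod_cons, LinearIsometryEquiv.coe_mul,
        Function.comp_apply, hc, map_sum]
      have hIcc : Finset.Icc (i + 1) j = insert (i + 1) (Finset.Icc (i + 2) j) := by
        ext m
        simp only [Finset.mem_Icc, Finset.mem_insert]
        omega
      rw [hIcc, Finset.sum_insert (by simp)]
      beta_reduce
      rw [if_pos rfl]
      have hstep : ∀ m ∈ Finset.Icc (i + 2) j,
          Submodule.reflection (ℝ ∙ δ (i + 1))ᗮ (c m • δ m) =
            c m • δ m - ((2 * ⟪δ (i + 1), δ m⟫) * c m) • δ (i + 1) := by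
        intro m hm
        rw [map_smul, refl_apply _ _ (hunit (i + 1) hik), smul_sub, smul_smul]
        ring_nf
      rw [Finset.sum_congr rfl hstep, Finset.sum_sub_distrib, ← Finset.sum_smul]
      have hcongr : ∀ m ∈ Finset.Icc (i + 2) j,
          (if m = i + 1 then
            -∑ m ∈ Finset.Icc (i + 2) j, (2 * ⟪δ (i + 1), δ m⟫) * c m else c m) • δ m
            = c m • δ m := by
        intro m hm
        rw [Finset.mem_Icc] at hm
        rw [if_neg (by omega)]
      rw [Finset.sum_congr rfl hcongr, neg_smul]
      abel

/-- For unit vectors `δ₀,…,δ_{k-1}` with pairwise nonpositive inner products and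
`i < j < k`: the vector `R(δ_{i+1})⋯R(δ_{j-1}) δⱼ` is a non-negative linear
combination of `δ_{i+1},…,δⱼ`; consequently `δᵢ · (R(δ_{i+1})⋯R(δ_{j-1}) δⱼ) ≤ 0`
and `εᵢ · εⱼ ≥ 0`, where `ε_m = R(δ₀)⋯R(δ_{m-1}) δ_m`. -/
theorem eps_inner_nonneg (n k : ℕ) (δ : ℕ → Euc n)
    (hunit : ∀ i < k, ‖δ i‖ = 1)
    (hobtuse : ∀ i < k, ∀ j < k, i ≠ j → ⟪δ i, δ j⟫ ≤ 0)
    (i j : ℕ) (hij : i < j) (hj : j < k) :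
    (∃ c : ℕ → ℝ, (∀ l, 0 ≤ c l) ∧
      ((List.range' (i + 1) (j - (i + 1))).map fun m => Submodule.reflection (ℝ ∙ (δ m))ᗮ).prod (δ j) =
        ∑ l ∈ Finset.Icc (i + 1) j, c l • δ l) ∧
    ⟪δ i, ((List.range' (i + 1) (j - (i + 1))).map fun m => Submodule.reflection (ℝ ∙ (δ m))ᗮ).prod (δ j)⟫ ≤ 0 ∧
    0 ≤ ⟪((List.range i).map fun m => Submodule.reflection (ℝ ∙ (δ m))ᗮ).prod (δ i),
        ((List.range j).map fun m => Submodule.reflection (ℝ ∙ (δ m))ᗮ).prod (δ j)⟫ := by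
  have hik : i < k := lt_trans hij hj
  have hjeq : i + 1 + (j - (i + 1)) = j := by omega
  obtain ⟨c, hc0, hc⟩ := keyA δ hunit hobtuse (j - (i + 1)) i (by omega)
  rw [hjeq] at hc
  have part1 : ∃ c : ℕ → ℝ, (∀ l, 0 ≤ c l) ∧
      ((List.range' (i + 1) (j - (i + 1))).map fun m => Submodule.reflection (ℝ ∙ (δ m))ᗮ).prod (δ j) =
        ∑ l ∈ Finset.Icc (i + 1) j, c l • δ l := ⟨c, hc0, hc⟩
  have part2 : ⟪δ i, ((List.range' (i + 1) (j - (i + 1))).map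
      fun m => Submodule.reflection (ℝ ∙ (δ m))ᗮ).prod (δ j)⟫ ≤ 0 := by
    rw [hc, inner_sum]
    refine Finset.sum_nonpos fun l hl => ?_
    rw [Finset.mem_Icc] at hl
    rw [real_inner_smul_right]
    exact mul_nonpos_of_nonneg_of_nonpos (hc0 l)
      (hobtuse i hik l (by omega) (by omega))
  refine ⟨part1, part2, ?_⟩
  have hsplit : List.range j = List.range i ++ List.range' i (j - i) := by
    have h2 : j - i + i = j := by omega
    rw [List.range_eq_range', List.range_eq_range']
    simpa [h2, Nat.add_sub_of_le hij.le] using (List.range'_append_1 (s := 0) (m := i) (n := j - i)).symm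
  rw [hsplit, List.map_append, List.prod_append, LinearIsometryEquiv.coe_mul,
    Function.comp_apply, LinearIsometryEquiv.inner_map_map]
  have hji : j - i = (j - (i + 1)) + 1 := by omega
  rw [hji, List.range'_succ, List.map_cons, List.prod_cons, LinearIsometryEquiv.coe_mul,
    Function.comp_apply]
  set P := ((List.range' (i + 1) (j - (i + 1))).map
    fun m => Submodule.reflection (ℝ ∙ (δ m))ᗮ).prod (δ j) with hP
  calc (0:ℝ) ≤ -⟪δ i, P⟫ := by linarith
    _ = ⟪δ i, Submodule.reflection (ℝ ∙ δ i)ᗮ P⟫ := by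
        have h := LinearIsometryEquiv.inner_map_map (Submodule.reflection (ℝ ∙ δ i)ᗮ) (δ i)
          (Submodule.reflection (ℝ ∙ δ i)ᗮ P)
        rw [Submodule.reflection_reflection, Submodule.reflection_orthogonalComplement_singleton_eq_neg,
          inner_neg_left] at h
        rw [← h]
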